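/- In the graph G′ constructed below: if a node a ∈ V_1 does not lie on a k-cycle in G, then d(a′, a) ≥ 2t, where a ∈ S and a′ ∈ T are the two copies of a in G′; that is, every directed path in G′ from a′ to a has total weight at least 2t. -/

import Mathlib

open scoped ENNReal

/-- Total weight of the walk that starts at `u` and then visits the vertices of `l` in
order.  Non-edges have weight `⊤`. -/
noncomputable def walkWeight {V : Type*} (w : V → V → ℝ≥0∞) : V → List V → ℝ≥0∞
  | _, [] => 0
  | u, x :: xs => w u x + walkWeight w x xs

/-- Shortest-path distance induced by the weight function `w` (`⊤` if there is no path). -/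
noncomputable def netDist {V : Type*} (w : V → V → ℝ≥0∞) (u v : V) : ℝ≥0∞ :=
  ⨅ (l : List V) (_ : (u :: l).getLast (List.cons_ne_nil u l) = v), walkWeight w u l

/-- Vertices of the graph `G'`: `A₁` will be `V₁` (for the two copies `S` and `T`),
`A₂` will be `V₂ ∪ ⋯ ∪ V_k` (for the two copies `fwd` and `bwd`), `gj` is the bit gadget
`J = {g_1, …, g_d}`, and `o1, …, o4` are the four omni-nodes. -/
inductive GVert (A₁ A₂ : Type) (d : ℕ) : Type
  | vS : A₁ → GVert A₁ A₂ d
  | vT : A₁ → GVert A₁ A₂ d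
  | fwd : A₂ → GVert A₁ A₂ d
  | bwd : A₂ → GVert A₁ A₂ d
  | gj : Fin d → GVert A₁ A₂ d
  | o1 : GVert A₁ A₂ d
  | o2 : GVert A₁ A₂ d
  | o3 : GVert A₁ A₂ d
  | o4 : GVert A₁ A₂ d

open Classical in
/-- Edge weights of `G'` (non-edges have weight `⊤`).  Here `part : A → ZMod k` gives the
part `V_{i+1}` of each vertex `i` of `G` (so `V₁ = {a | part a = 0}`), `E` is the edge
relation of `G`, `t` is the weight scale and `ident a` is the identifier `ā ∈ {0,1}^d`. -/
noncomputable def gw {A : Type} (k : ℕ) (part : A → ZMod k) (E : A → A → Prop)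
    (d t : ℕ) (ident : A → Fin d → Bool) :
    GVert {a : A // part a = 0} {x : A // part x ≠ 0} d →
      GVert {a : A // part a = 0} {x : A // part x ≠ 0} d → ℝ≥0∞
  -- edges of G inside V₂ ∪ ⋯ ∪ V_k, copied forwards and backwards
  | .fwd x, .fwd y => if E x.1 y.1 then 1 else ⊤
  | .bwd y, .bwd x => if E x.1 y.1 then 1 else ⊤
  -- edges of G leaving V₁
  | .vS a, .fwd x => if E a.1 x.1 then ((3 * t + 1 : ℕ) : ℝ≥0∞) else ⊤
  | .bwd x, .vS a => if E a.1 x.1 then 1 else ⊤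
  -- edges of G entering V₁
  | .fwd x, .vT a => if E x.1 a.1 then ((3 * t + 1 : ℕ) : ℝ≥0∞) else ⊤
  | .vT a, .bwd x => if E x.1 a.1 then 1 else ⊤
  -- omni-nodes to/from the fwd and bwd copies
  | .o1, .fwd _ => 1
  | .fwd _, .o2 => 1
  | .o3, .bwd _ => 1
  | .bwd _, .o4 => 1
  -- S to/from omni-nodes
  | .vS _, .o1 => ((5 * t + 1 : ℕ) : ℝ≥0∞)
  | .o2, .vS _ => ((t + 1 : ℕ) : ℝ≥0∞)
  | .vS _, .o3 => ((4 * t + 1 : ℕ) : ℝ≥0∞)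
  | .o4, .vS _ => ((2 * t + 1 : ℕ) : ℝ≥0∞)
  -- T to/from omni-nodes
  | .vT _, .o1 => ((t + 1 : ℕ) : ℝ≥0∞)
  | .o2, .vT _ => ((5 * t + 1 : ℕ) : ℝ≥0∞)
  | .vT _, .o3 => ((2 * t + 1 : ℕ) : ℝ≥0∞)
  | .o4, .vT _ => ((4 * t + 1 : ℕ) : ℝ≥0∞)
  -- weight-3t edges between distinct omni-nodes
  | .o1, .o2 => ((3 * t : ℕ) : ℝ≥0∞)
  | .o1, .o3 => ((3 * t : ℕ) : ℝ≥0∞)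
  | .o1, .o4 => ((3 * t : ℕ) : ℝ≥0∞)
  | .o2, .o1 => ((3 * t : ℕ) : ℝ≥0∞)
  | .o2, .o3 => ((3 * t : ℕ) : ℝ≥0∞)
  | .o2, .o4 => ((3 * t : ℕ) : ℝ≥0∞)
  | .o3, .o1 => ((3 * t : ℕ) : ℝ≥0∞)
  | .o3, .o2 => ((3 * t : ℕ) : ℝ≥0∞)
  | .o3, .o4 => ((3 * t : ℕ) : ℝ≥0∞)
  | .o4, .o1 => ((3 * t : ℕ) : ℝ≥0∞)
  | .o4, .o2 => ((3 * t : ℕ) : ℝ≥0∞)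
  | .o4, .o3 => ((3 * t : ℕ) : ℝ≥0∞)
  -- the bit gadget: S to/from J
  | .vS a, .gj j => if ident a.1 j then ((3 * t + 1 : ℕ) : ℝ≥0∞) else ((5 * t + 1 : ℕ) : ℝ≥0∞)
  | .gj j, .vS a => if ident a.1 j then ((2 * t + 1 : ℕ) : ℝ≥0∞) else 1
  -- the bit gadget: T to/from J
  | .gj j, .vT a => if ident a.1 j then ((5 * t + 1 : ℕ) : ℝ≥0∞) else ((3 * t + 1 : ℕ) : ℝ≥0∞)
  | .vT a, .gj j => if ident a.1 j then 1 else ((2 * t + 1 : ℕ) : ℝ≥0∞)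
  -- weight-(3t+1) edges between J and the omni-nodes, in both directions
  | .gj _, .o1 => ((3 * t + 1 : ℕ) : ℝ≥0∞)
  | .gj _, .o2 => ((3 * t + 1 : ℕ) : ℝ≥0∞)
  | .gj _, .o3 => ((3 * t + 1 : ℕ) : ℝ≥0∞)
  | .gj _, .o4 => ((3 * t + 1 : ℕ) : ℝ≥0∞)
  | .o1, .gj _ => ((3 * t + 1 : ℕ) : ℝ≥0∞)
  | .o2, .gj _ => ((3 * t + 1 : ℕ) : ℝ≥0∞)
  | .o3, .gj _ => ((3 * t + 1 : ℕ) : ℝ≥0∞)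
  | .o4, .gj _ => ((3 * t + 1 : ℕ) : ℝ≥0∞)
  -- all remaining pairs: no edge
  | _, _ => ⊤

/-- `a ∈ V₁` lies on a `k`-cycle of `G`: there are `x₂ ∈ V₂, …, x_k ∈ V_k` with
`(a,x₂), (x₂,x₃), …, (x_{k-1},x_k), (x_k,a)` all edges of `G`. -/
def liesOnKCycle {A : Type} (E : A → A → Prop) (k : ℕ) (a : A) : Prop :=
  ∃ x : ℕ → A, x 0 = a ∧ (∀ i, i < k - 1 → E (x i) (x (i + 1))) ∧ E (x (k - 1)) a

section Aux

variable {A : Type} {k : ℕ} (part : A → ZMod k) (E : A → A → Prop) (a : A)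

/-- `x` can reach `a` via an `E`-walk staying in nonzero parts. -/
def Danger (x : A) : Prop :=
  ∃ n, ∃ w : ℕ → A, w 0 = x ∧ (∀ i, i ≤ n → part (w i) ≠ 0) ∧
    (∀ i, i < n → E (w i) (w (i + 1))) ∧ E (w n) a

open Classical in
/-- Potential function used to lower bound walk weights. -/
noncomputable def phi (t : ℕ) (d : ℕ) (ident : A → Fin d → Bool) :
    GVert {b : A // part b = 0} {x : A // part x ≠ 0} d → ℕ
  | .vS b => if b.1 = a then 0 else 2 * t
  | .vT b => if b.1 = a then 2 * t else 0
  | .fwd _ => t - 2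
  | .bwd x => if Danger part E a x.1 then 2 * t - k + (part x.1).val else 0
  | .gj j => if ident a j then 2 * t - 1 else 0
  | .o1 => t - 1
  | .o2 => t - 3
  | .o3 => 0
  | .o4 => 2 * t - 2

variable {part E a}

lemma val_succ (hk : 3 ≤ k) {x y : A} (hxy : part y = part x + 1) (hy : part y ≠ 0) :
    (part y).val = (part x).val + 1 := by
  haveI : NeZero k := ⟨by omega⟩
  haveI : Fact (1 < k) := ⟨by omega⟩
  have h1 : (part y).val = ((part x).val + (1 : ZMod k).val) % k := by
    rw [hxy]; exact ZMod.val_add _ _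
  rw [ZMod.val_one] at h1
  have h2 : (part x).val < k := ZMod.val_lt _
  have h3 : (part y).val ≠ 0 := fun h => hy ((ZMod.val_eq_zero _).mp h)
  rcases Nat.lt_or_ge ((part x).val + 1) k with hl | hg
  · rw [Nat.mod_eq_of_lt hl] at h1
    exact h1
  · have hke : (part x).val + 1 = k := by omega
    rw [hke, Nat.mod_self] at h1
    exact absurd h1 h3

lemma val_last (hk : 3 ≤ k) (ha : part a = 0) {x : A} (hxa : E x a)
    (hE : ∀ u v : A, E u v → part v = part u + 1) :
    part x ≠ 0 ∧ (part x).val = k - 1 := by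
  haveI : NeZero k := ⟨by omega⟩
  haveI : Fact (1 < k) := ⟨by omega⟩
  have h := hE _ _ hxa
  rw [ha] at h
  have h1 : ((0 : ZMod k)).val = ((part x).val + (1 : ZMod k).val) % k := by
    rw [h]; exact ZMod.val_add _ _
  rw [ZMod.val_one, ZMod.val_zero] at h1
  have h2 : (part x).val < k := ZMod.val_lt _
  have h4 : (part x).val = k - 1 := by
    rcases Nat.lt_or_ge ((part x).val + 1) k with hl | hg
    · rw [Nat.mod_eq_of_lt hl] at h1
      omega
    · omega
  refine ⟨fun h0 => ?_, h4⟩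
  rw [h0, ZMod.val_zero] at h4
  omega

lemma danger_of_E (hk : 3 ≤ k) (ha : part a = 0) {x : A} (hxa : E x a)
    (hE : ∀ u v : A, E u v → part v = part u + 1) : Danger part E a x :=
  ⟨0, fun _ => x, rfl, fun _ _ => (val_last hk ha hxa hE).1, fun _ h => absurd h (by omega),
    hxa⟩

lemma danger_step {x y : A} (hy : Danger part E a y) (hxy : E x y) (hx : part x ≠ 0) :
    Danger part E a x := by
  obtain ⟨n, w, hw0, hwnz, hwE, hwa⟩ := hy
  refine ⟨n + 1, fun i => Nat.rec x (fun j _ => w j) i, rfl, ?_, ?_, hwa⟩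
  · rintro (_ | i) hi
    · exact hx
    · exact hwnz i (by omega)
  · rintro (_ | i) hi
    · simpa [hw0] using hxy
    · exact hwE i (by omega)

lemma danger_cycle (hk : 3 ≤ k) (ha : part a = 0) {x : A} (hd : Danger part E a x)
    (hax : E a x) (hE : ∀ u v : A, E u v → part v = part u + 1) :
    liesOnKCycle E k a := by
  haveI : NeZero k := ⟨by omega⟩
  haveI : Fact (1 < k) := ⟨by omega⟩
  obtain ⟨n, w, hw0, hwnz, hwE, hwa⟩ := hd
  -- part (w i) has val 1 + i for i ≤ n
  have hval : ∀ i, i ≤ n → (part (w i)).val = 1 + i := by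
    intro i
    induction i with
    | zero =>
      intro _
      have hx : part x = 1 := by rw [hE _ _ hax, ha, zero_add]
      rw [hw0, hx, ZMod.val_one]
    | succ j ih =>
      intro hj
      have h1 := val_succ hk (hE _ _ (hwE j (by omega))) (hwnz (j + 1) hj)
      rw [h1, ih (by omega)]
      omega
  have hvn := hval n le_rfl
  have hnk : n + 1 < k := by
    have := ZMod.val_lt (part (w n))
    omega
  -- part a = part (w n) + 1 = 0 gives (n + 2) % k = 0
  have h1 : ((0 : ZMod k)).val = ((part (w n)).val + (1 : ZMod k).val) % k := by
    rw [← ha, hE _ _ hwa]; exact ZMod.val_add _ _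
  rw [ZMod.val_one, ZMod.val_zero, hvn] at h1
  have hnk2 : n = k - 2 := by
    rcases Nat.lt_or_ge (1 + n + 1) k with hl | hg
    · rw [Nat.mod_eq_of_lt hl] at h1
      omega
    · have hke : 1 + n + 1 = k := by omega
      omega
  refine ⟨fun i => Nat.rec a (fun j _ => w j) i, rfl, ?_, ?_⟩
  · rintro (_ | i) hi
    · simpa [hw0] using hax
    · exact hwE i (by omega)
  · have hk1 : k - 1 = n + 1 := by omega
    rw [hk1]
    exact hwa
end Aux

lemma walk_ge {V : Type*} (w : V → V → ℝ≥0∞) (f : V → ℝ≥0∞)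
    (h : ∀ u v, f u ≤ w u v + f v) :
    ∀ (l : List V) (u : V), f u ≤ walkWeight w u l + f ((u :: l).getLast (by simp)) := by
  intro l
  induction l with
  | nil => intro u; simp [walkWeight]
  | cons x xs ih =>
    intro u
    calc f u ≤ w u x + f x := h u x
    _ ≤ w u x + (walkWeight w x xs + f ((x :: xs).getLast (by simp))) :=
        add_le_add le_rfl (ih x)
    _ = walkWeight w u (x :: xs) + f ((u :: x :: xs).getLast (by simp)) := by
        rw [walkWeight, add_assoc, List.getLast_cons (by simp : x :: xs ≠ [])]


set_option maxHeartbeats 2000000 in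
open Classical in
lemma phi_edge {A : Type} (k t : ℕ) (hk : 3 ≤ k) (ht : 2 * k < t)
    (part : A → ZMod k) (E : A → A → Prop)
    (hE : ∀ u v : A, E u v → part v = part u + 1)
    (d : ℕ) (ident : A → Fin d → Bool)
    (a : A) (ha : part a = 0) (hno : ¬ liesOnKCycle E k a) :
    ∀ u v, ((phi part E a t d ident u : ℕ) : ℝ≥0∞) ≤
      gw k part E d t ident u v + ((phi part E a t d ident v : ℕ) : ℝ≥0∞) := by
  haveI : NeZero k := ⟨by omega⟩
  intro u v
  rcases u with b|b|x|x|j|_|_|_|_ <;> rcases v with c|c|y|y|j2|_|_|_|_ <;>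
    simp only [gw, phi] <;>
    try (first
      | (simp only [top_add]; exact le_top)
      | (norm_cast; omega)
      | (split_ifs <;>
          first
            | (simp only [top_add]; exact le_top)
            | (simp only [Nat.cast_zero]; exact zero_le _)
            | (norm_cast; omega)))
  · -- vT b → bwd y
    by_cases hb : b.1 = a
    · by_cases hex : E y.1 b.1
      · have hexa : E y.1 a := hb ▸ hex
        have hd : Danger part E a y.1 := danger_of_E hk ha hexa hE
        have hv := (val_last hk ha hexa hE).2
        rw [if_pos hb, if_pos hex, if_pos hd, hv]
        norm_cast
        omega
      · rw [if_neg hex]; simp only [top_add]; exact le_top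
    · rw [if_neg hb, Nat.cast_zero]; exact zero_le
  · -- vT b → gj j2
    by_cases hb : b.1 = a
    · rw [hb, if_pos rfl]
      by_cases hij : ident a j2
      · rw [if_pos hij, if_pos hij]; norm_cast; omega
      · rw [if_neg hij, if_neg hij]; norm_cast; omega
    · rw [if_neg hb, Nat.cast_zero]; exact zero_le
  · -- bwd x → vS c
    by_cases hd : Danger part E a x.1
    · by_cases hex : E c.1 x.1
      · by_cases hbc : c.1 = a
        · have hexa : E a x.1 := hbc ▸ hex
          exact absurd (danger_cycle hk ha hd hexa hE) hno
        · rw [if_pos hd, if_pos hex, if_neg hbc]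
          have := ZMod.val_lt (part x.1)
          norm_cast
          omega
      · rw [if_neg hex]; simp only [top_add]; exact le_top
    · rw [if_neg hd, Nat.cast_zero]; exact zero_le
  · -- bwd x → bwd y
    by_cases hex : E y.1 x.1
    · by_cases hd : Danger part E a x.1
      · have hdy : Danger part E a y.1 := danger_step hd hex y.2
        have hv : (part x.1).val = (part y.1).val + 1 := val_succ hk (hE _ _ hex) x.2
        rw [if_pos hex, if_pos hd, if_pos hdy, hv]
        have := ZMod.val_lt (part y.1)
        norm_cast
        omega
      · rw [if_neg hd, Nat.cast_zero]; exact zero_le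
    · rw [if_neg hex]; simp only [top_add]; exact le_top
  · -- bwd x → o4
    by_cases hd : Danger part E a x.1
    · rw [if_pos hd]
      have := ZMod.val_lt (part x.1)
      norm_cast
      omega
    · rw [if_neg hd, Nat.cast_zero]; exact zero_le
  · -- gj j → vS c
    by_cases hbc : c.1 = a
    · rw [hbc, if_pos rfl]
      by_cases hij : ident a j
      · rw [if_pos hij, if_pos hij]; norm_cast; try omega
      · rw [if_neg hij, if_neg hij]; norm_cast; try omega
    · rw [if_neg hbc]
      split_ifs <;> norm_cast <;> try omega

/-- If `a ∈ V₁` does not lie on a `k`-cycle of `G`, then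
`d(a′, a) ≥ 2t` in `G′`, i.e. every directed path from the copy `a′ ∈ T` to the copy
`a ∈ S` has total weight at least `2t`. -/
theorem stmt_16 {A : Type} (k t : ℕ) (hk : 3 ≤ k) (ht : 2 * k < t)
    (part : A → ZMod k) (E : A → A → Prop)
    (hE : ∀ u v : A, E u v → part v = part u + 1)
    (d : ℕ) (ident : A → Fin d → Bool)
    (hid₁ : ∀ a b : A, part a = 0 → part b = 0 → a ≠ b →
      (∃ i : Fin d, ident a i = true ∧ ident b i = false) ∧
      (∃ j : Fin d, ident a j = false ∧ ident b j = true))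
    (hid₂ : ∀ a b : A, part a = 0 → part b = 0 →
      (∃ i : Fin d, ident a i = true ∧ ident b i = true) ∧
      (∃ j : Fin d, ident a j = false ∧ ident b j = false))
    (a : A) (ha : part a = 0) (hno : ¬ liesOnKCycle E k a) :
    ((2 * t : ℕ) : ℝ≥0∞) ≤
      netDist (gw k part E d t ident) (GVert.vT ⟨a, ha⟩) (GVert.vS ⟨a, ha⟩) := by
  have key := phi_edge k t hk ht part E hE d ident a ha hno
  refine le_iInf fun l => le_iInf fun hl => ?_
  have h := walk_ge (gw k part E d t ident)
    (fun v => ((phi part E a t d ident v : ℕ) : ℝ≥0∞)) key l (GVert.vT ⟨a, ha⟩)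
  rw [hl] at h
  simp only [phi, if_true] at h
  simpa using h
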